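/- arXiv:1208.3490 — 3 statements merged into one kernel-verified Lean document; each statement's English description precedes it below -/
import Mathlib

section
/- Let T be an ideal irreducible positive operator on a real Banach lattice X with dim X > 1. If Tx = λx for some x > 0 and λ ∈ ℝ, then x is a quasi-interior point of X and λ > 0. -/
open scoped ENNReal

variable {X : Type*}

def IsPositiveOp [NormedAddCommGroup X] [Lattice X] [IsOrderedAddMonoid X] [HasSolidNorm X] [NormedSpace ℝ X]
    (T : X →L[ℝ] X) : Prop := ∀ x : X, 0 ≤ x → 0 ≤ T x

def IsClosedIdeal [NormedAddCommGroup X] [Lattice X] [IsOrderedAddMonoid X] [HasSolidNorm X] [NormedSpace ℝ X]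
    (J : Submodule ℝ X) : Prop :=
  IsClosed (J : Set X) ∧ ∀ x y : X, |y| ≤ |x| → x ∈ J → y ∈ J

def IdealIrreducible [NormedAddCommGroup X] [Lattice X] [IsOrderedAddMonoid X] [HasSolidNorm X] [NormedSpace ℝ X]
    (T : X →L[ℝ] X) : Prop :=
  ∀ J : Submodule ℝ X, IsClosedIdeal J → (∀ x ∈ J, T x ∈ J) → J = ⊥ ∨ J = ⊤

/-- A band: a solid submodule closed under existing suprema. -/
def IsBand [NormedAddCommGroup X] [Lattice X] [IsOrderedAddMonoid X] [HasSolidNorm X] [NormedSpace ℝ X]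
    (J : Submodule ℝ X) : Prop :=
  (∀ x y : X, |y| ≤ |x| → x ∈ J → y ∈ J) ∧
    ∀ (A : Set X) (x : X), A ⊆ (J : Set X) → IsLUB A x → x ∈ J

def BandIrreducible [NormedAddCommGroup X] [Lattice X] [IsOrderedAddMonoid X] [HasSolidNorm X] [NormedSpace ℝ X]
    (T : X →L[ℝ] X) : Prop :=
  ∀ J : Submodule ℝ X, IsBand J → (∀ x ∈ J, T x ∈ J) → J = ⊥ ∨ J = ⊤

def QuasiInterior [NormedAddCommGroup X] [Lattice X] [IsOrderedAddMonoid X] [HasSolidNorm X] [NormedSpace ℝ X]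
    (x : X) : Prop :=
  closure {y : X | ∃ c : ℝ, |y| ≤ c • x} = Set.univ

/-- A weak (order) unit. -/
def WeakUnit [NormedAddCommGroup X] [Lattice X] [IsOrderedAddMonoid X] [HasSolidNorm X] [NormedSpace ℝ X]
    (x : X) : Prop := 0 < x ∧ ∀ y : X, |y| ⊓ x = 0 → y = 0

def IsPositiveFunc [NormedAddCommGroup X] [Lattice X] [IsOrderedAddMonoid X] [HasSolidNorm X] [NormedSpace ℝ X]
    (f : StrongDual ℝ X) : Prop := ∀ x : X, 0 ≤ x → 0 ≤ f x

def StrictlyPositiveFunc [NormedAddCommGroup X] [Lattice X] [IsOrderedAddMonoid X] [HasSolidNorm X] [NormedSpace ℝ X]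
    (f : StrongDual ℝ X) : Prop := ∀ x : X, 0 < x → 0 < f x

noncomputable def adjOp [NormedAddCommGroup X] [Lattice X] [IsOrderedAddMonoid X] [HasSolidNorm X] [NormedSpace ℝ X]
    (T : X →L[ℝ] X) : StrongDual ℝ X →L[ℝ] StrongDual ℝ X :=
  (ContinuousLinearMap.compL ℝ X X ℝ).flip T

/-- `T` is σ-order continuous: `x_n ↓ 0` implies `T x_n ↓ 0`. -/
def SigmaOrderContinuousOp [NormedAddCommGroup X] [Lattice X] [IsOrderedAddMonoid X] [HasSolidNorm X] [NormedSpace ℝ X]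
    (T : X →L[ℝ] X) : Prop :=
  ∀ u : ℕ → X, Antitone u → IsGLB (Set.range u) 0 →
    IsGLB (Set.range fun n => T (u n)) 0

/-- A σ-order continuous functional. -/
def SigmaOrderContinuousFunc [NormedAddCommGroup X] [Lattice X] [IsOrderedAddMonoid X] [HasSolidNorm X] [NormedSpace ℝ X]
    (f : StrongDual ℝ X) : Prop :=
  ∀ u : ℕ → X, Antitone u → IsGLB (Set.range u) 0 →
    Filter.Tendsto (fun n => f (u n)) Filter.atTop (nhds 0)

/-- A set is relatively weakly compact. -/
def RelWeaklyCompact [NormedAddCommGroup X] [Lattice X] [IsOrderedAddMonoid X] [HasSolidNorm X] [NormedSpace ℝ X]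
    (s : Set X) : Prop :=
  IsCompact (closure ((toWeakSpace ℝ X) '' s))

/-- `T` is order weakly compact: `T[0,x]` is relatively weakly compact for all `x > 0`. -/
def OrderWeaklyCompactOp [NormedAddCommGroup X] [Lattice X] [IsOrderedAddMonoid X] [HasSolidNorm X] [NormedSpace ℝ X]
    (T : X →L[ℝ] X) : Prop :=
  ∀ x : X, 0 < x → RelWeaklyCompact (T '' Set.Icc 0 x)

section AuxLemmas
variable {E : Type*} [NormedAddCommGroup E] [Lattice E] [IsOrderedAddMonoid E] [HasSolidNorm E] [NormedSpace ℝ E]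

lemma myAbsSup (a : E) : |a| = a ⊔ -a := rfl

lemma myAbsCont : Continuous (fun z : E => |z|) := by
  have h : (fun z : E => |z|) = fun z : E => z ⊔ -z := rfl
  rw [h]; exact continuous_id.sup continuous_neg

lemma myPowSemiclosed : ∀ (k : ℕ) (y : E), 0 ≤ 2 ^ k • y → 0 ≤ y := by
  intro k
  induction k with
  | zero => intro y h; simpa using h
  | succ k ih =>
    intro y h
    apply ih
    apply nsmul_two_semiclosed
    rw [smul_smul]
    have h2 : 2 * 2 ^ k = 2 ^ (k + 1) := by ring
    rwa [h2]

lemma mySmulNonneg {c : ℝ} {x : E} (hc : 0 ≤ c) (hx : 0 ≤ x) : 0 ≤ c • x := by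
  have hdy : ∀ (m k : ℕ), (0 : E) ≤ ((m : ℝ) / 2 ^ k) • x := by
    intro m k
    apply myPowSemiclosed k
    rw [← Nat.cast_smul_eq_nsmul ℝ (2 ^ k), smul_smul]
    have h2 : ((2 ^ k : ℕ) : ℝ) * ((m : ℝ) / 2 ^ k) = (m : ℝ) := by
      push_cast
      field_simp
    rw [h2, Nat.cast_smul_eq_nsmul]
    exact nsmul_nonneg hx m
  set f : ℕ → ℝ := fun k => ((⌊c * 2 ^ k⌋₊ : ℕ) : ℝ) / 2 ^ k with hf
  have htend : Filter.Tendsto f Filter.atTop (nhds c) := by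
    have hlow : ∀ k, c - (1 / 2 : ℝ) ^ k ≤ f k := by
      intro k
      have h2k : (0 : ℝ) < 2 ^ k := by positivity
      have h3 := Nat.lt_floor_add_one (c * 2 ^ k)
      rw [hf]
      rw [le_div_iff₀ h2k, sub_mul]
      have h4 : (1 / 2 : ℝ) ^ k * 2 ^ k = 1 := by
        rw [one_div, inv_pow, inv_mul_cancel₀ h2k.ne']
      rw [h4]
      linarith
    have hup : ∀ k, f k ≤ c := by
      intro k
      have h2k : (0 : ℝ) < 2 ^ k := by positivity
      rw [hf, div_le_iff₀ h2k]
      exact Nat.floor_le (by positivity)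
    have hlt : Filter.Tendsto (fun k : ℕ => c - (1 / 2 : ℝ) ^ k)
        Filter.atTop (nhds c) := by
      have := tendsto_pow_atTop_nhds_zero_of_lt_one (by norm_num : (0:ℝ) ≤ 1/2)
        (by norm_num : (1/2 : ℝ) < 1)
      simpa using tendsto_const_nhds.sub this
    exact tendsto_of_tendsto_of_tendsto_of_le_of_le hlt tendsto_const_nhds hlow hup
  have hsm : Filter.Tendsto (fun k => f k • x) Filter.atTop (nhds (c • x)) :=
    htend.smul_const x
  exact ge_of_tendsto' hsm fun k => hdy _ k

lemma mySmulLe {c : ℝ} {a b : E} (hc : 0 ≤ c) (h : a ≤ b) : c • a ≤ c • b := by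
  have := mySmulNonneg hc (sub_nonneg.mpr h)
  rwa [smul_sub, sub_nonneg] at this

lemma mySmulLeRight {c d : ℝ} {u : E} (hcd : c ≤ d) (hu : 0 ≤ u) :
    c • u ≤ d • u := by
  have := mySmulNonneg (sub_nonneg.mpr hcd) hu
  rwa [sub_smul, sub_nonneg] at this

lemma mySmulNonpos {c : ℝ} {x : E} (hc : c ≤ 0) (hx : 0 ≤ x) : c • x ≤ 0 := by
  have := mySmulNonneg (neg_nonneg.mpr hc) hx
  rw [neg_smul] at this
  exact neg_nonneg.mp this

lemma myAbsOfNonneg {a : E} (h : 0 ≤ a) : |a| = a := by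
  rw [myAbsSup]
  exact sup_eq_left.mpr ((neg_nonpos.mpr h).trans h)

lemma mySmulAbsLe (r : ℝ) (a : E) : r • a ≤ |r| • |a| := by
  rcases le_or_gt 0 r with hr | hr
  · rw [abs_of_nonneg hr]
    exact mySmulLe hr (le_abs_self a)
  · have h1 : r • a = (-r) • (-a) := by rw [neg_smul, smul_neg, neg_neg]
    rw [h1, abs_of_neg hr]
    exact mySmulLe (by linarith) (neg_le_abs a)

lemma myAbsSmulLe (r : ℝ) (a : E) : |r • a| ≤ |r| • |a| := by
  rw [myAbsSup]
  refine sup_le (mySmulAbsLe r a) ?_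
  rw [← neg_smul]
  have := mySmulAbsLe (-r) a
  rwa [abs_neg] at this

lemma myArch {a b : E} (h : ∀ n : ℕ, (n : ℝ) • a ≤ b) : a ≤ 0 := by
  have h1 : ∀ n : ℕ, a ≤ (1 / ((n : ℝ) + 1)) • b := by
    intro n
    have hpos : (0 : ℝ) < (n : ℝ) + 1 := by positivity
    have h2 : ((n : ℝ) + 1) • a ≤ b := by
      have := h (n + 1); push_cast at this; exact this
    calc a = (1 / ((n : ℝ) + 1)) • (((n : ℝ) + 1) • a) := by
            rw [smul_smul, one_div, inv_mul_cancel₀ hpos.ne', one_smul]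
      _ ≤ (1 / ((n : ℝ) + 1)) • b := mySmulLe (by positivity) h2
  have ht : Filter.Tendsto (fun n : ℕ => (1 / ((n : ℝ) + 1)) • b)
      Filter.atTop (nhds 0) := by
    simpa using (tendsto_one_div_add_atTop_nhds_zero_nat (𝕜 := ℝ)).smul_const b
  exact ge_of_tendsto' ht h1

lemma mySolidClosure {S : Set E} (hS : ∀ a b : E, |b| ≤ |a| → a ∈ S → b ∈ S)
    {a b : E} (hb : |b| ≤ |a|) (ha : a ∈ closure S) : b ∈ closure S := by
  obtain ⟨u, humem, hulim⟩ := mem_closure_iff_seq_limit.mp ha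
  set f : E → E := fun z => (b ⊔ (-|z|)) ⊓ |z| with hf
  have hfc : Continuous f := (continuous_const.sup myAbsCont.neg).inf myAbsCont
  have hfa : f a = b := by
    obtain ⟨h1, h2⟩ := abs_le'.mp hb
    have h3 : -|a| ≤ b := neg_le.mp h2
    simp only [hf, sup_eq_left.mpr h3, inf_eq_left.mpr h1]
  have hmem : ∀ n : ℕ, f (u n) ∈ S := by
    intro n
    refine hS (u n) _ ?_ (humem n)
    have hlow : -|u n| ≤ f (u n) :=
      le_inf le_sup_right ((neg_nonpos.mpr (abs_nonneg _)).trans (abs_nonneg _))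
    exact abs_le'.mpr ⟨inf_le_right, neg_le.mp hlow⟩
  have htend : Filter.Tendsto (fun n => f (u n)) Filter.atTop (nhds b) := by
    have := (hfc.tendsto a).comp hulim
    rwa [hfa] at this
  exact mem_closure_of_tendsto htend (Filter.Eventually.of_forall hmem)

lemma myDisjointPair (hdim : 1 < Module.rank ℝ E) {x : E} (hx : 0 < x) :
    ∃ u v : E, 0 < u ∧ 0 < v ∧ u ⊓ v = 0 := by
  by_contra hcon
  push_neg at hcon
  have total : ∀ a b : E, a ≤ b ∨ b ≤ a := by
    intro a b
    by_cases hp : (a - b)⁺ = 0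
    · exact Or.inl (sub_nonpos.mp (posPart_eq_zero.mp hp))
    · by_cases hn : (a - b)⁻ = 0
      · exact Or.inr (sub_nonneg.mp (negPart_eq_zero.mp hn))
      · exact absurd (posPart_inf_negPart_eq_zero (a - b))
          (hcon _ _ (lt_of_le_of_ne (posPart_nonneg _) (Ne.symm hp))
            (lt_of_le_of_ne (negPart_nonneg _) (Ne.symm hn)))
  have hr : ¬ Module.rank ℝ E ≤ 1 := not_le.mpr hdim
  rw [rank_le_one_iff] at hr
  push_neg at hr
  obtain ⟨w, hw⟩ := hr x
  have key : ∀ t : ℝ, w ≤ t • x ∨ t • x ≤ w := fun t => total w (t • x)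
  set S := {t : ℝ | w ≤ t • x} with hSdef
  have hSclosed : IsClosed S :=
    isClosed_le continuous_const (continuous_id.smul continuous_const)
  have hSne : S.Nonempty := by
    by_contra hS
    rw [Set.not_nonempty_iff_eq_empty] at hS
    have h3 : ∀ n : ℕ, (n : ℝ) • x ≤ w := by
      intro n
      refine (key n).resolve_left fun hmem => ?_
      have h4 : ((n : ℝ)) ∈ S := hmem
      simp [hS] at h4
    exact hx.not_ge (myArch h3)
  have hlb : ∃ t0 : ℝ, t0 • x ≤ w := by
    by_contra h0; push_neg at h0
    have h3 : ∀ n : ℕ, (n : ℝ) • x ≤ -w := by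
      intro n
      have h4 := (key (-(n : ℝ))).resolve_right (fun h => (h0 _ h).elim)
      rw [neg_smul] at h4
      exact le_neg.mp h4
    exact hx.not_ge (myArch h3)
  obtain ⟨t0, ht0⟩ := hlb
  have hposcoef : ∀ {c : ℝ}, c < 0 → (0 : E) ≤ c • x → x ≤ 0 := by
    intro c hc h
    have h2 : c⁻¹ • (c • x) ≤ 0 := mySmulNonpos (inv_nonpos.mpr hc.le) h
    rwa [smul_smul, inv_mul_cancel₀ hc.ne, one_smul] at h2
  have hbdd : BddBelow S := by
    refine ⟨t0, fun t ht => ?_⟩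
    by_contra hlt; push_neg at hlt
    have hle : t0 • x ≤ t • x := le_trans ht0 ht
    have h5 : (0 : E) ≤ (t - t0) • x := by rwa [sub_smul, sub_nonneg]
    exact hx.not_ge (hposcoef (by linarith) h5)
  set c := sInf S with hc
  have hcS : c ∈ S := hSclosed.csInf_mem hSne hbdd
  have hge : w ≤ c • x := hcS
  have hle2 : c • x ≤ w := by
    have hseq : ∀ n : ℕ, (c - 1 / ((n : ℝ) + 1)) • x ≤ w := by
      intro n
      have htn : c - 1 / ((n : ℝ) + 1) < c := by
        have h6 : (0:ℝ) < 1 / ((n : ℝ) + 1) := by positivity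
        linarith
      have hnot : c - 1 / ((n : ℝ) + 1) ∉ S := fun hmem =>
        absurd (csInf_le hbdd hmem) (not_le.mpr htn)
      exact (key _).resolve_left hnot
    have htend : Filter.Tendsto (fun n : ℕ => (c - 1 / ((n : ℝ) + 1)) • x)
        Filter.atTop (nhds (c • x)) := by
      have h1 : Filter.Tendsto (fun n : ℕ => c - 1 / ((n : ℝ) + 1))
          Filter.atTop (nhds c) := by
        simpa using tendsto_const_nhds.sub (tendsto_one_div_add_atTop_nhds_zero_nat (𝕜 := ℝ))
      exact h1.smul_const x
    exact le_of_tendsto htend (Filter.Eventually.of_forall hseq)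
  exact hw c (le_antisymm hle2 hge)

/-- The (not closed) ideal generated by `u`. -/
def myGenIdeal (u : E) : Submodule ℝ E where
  carrier := {y | ∃ c : ℝ, |y| ≤ c • u}
  zero_mem' := ⟨0, by simp⟩
  add_mem' := by
    rintro a b ⟨c, hc⟩ ⟨d, hd⟩
    exact ⟨c + d, (abs_add_le a b).trans (by rw [add_smul]; exact add_le_add hc hd)⟩
  smul_mem' := by
    rintro r a ⟨c, hc⟩
    refine ⟨|r| * c, (myAbsSmulLe r a).trans ?_⟩
    rw [mul_smul]
    exact mySmulLe (abs_nonneg r) hc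

lemma myClosureInvariant {S : Set E} (T : E →L[ℝ] E) (h : ∀ y ∈ S, T y ∈ S) :
    ∀ y ∈ closure S, T y ∈ closure S := by
  intro y hy
  obtain ⟨u, hm, hl⟩ := mem_closure_iff_seq_limit.mp hy
  exact mem_closure_of_tendsto ((T.continuous.tendsto y).comp hl)
    (Filter.Eventually.of_forall fun n => h _ (hm n))

end AuxLemmas

theorem stmt2 [NormedAddCommGroup X] [Lattice X] [IsOrderedAddMonoid X] [HasSolidNorm X] [NormedSpace ℝ X]
    (hdim : 1 < Module.rank ℝ X)
    (T : X →L[ℝ] X) (hT : IsPositiveOp T) (hirr : IdealIrreducible T)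
    (l : ℝ) (x : X) (hx : 0 < x) (heig : T x = l • x) :
    QuasiInterior x ∧ 0 < l := by
  have hmono : ∀ a b : X, a ≤ b → T a ≤ T b := by
    intro a b h
    have h2 := hT (b - a) (sub_nonneg.mpr h)
    rw [map_sub] at h2
    exact sub_nonneg.mp h2
  have habsT : ∀ y : X, |T y| ≤ T |y| := by
    intro y
    refine abs_le'.mpr ⟨hmono _ _ (le_abs_self y), ?_⟩
    have h3 : T (-y) ≤ T |y| := hmono _ _ (neg_le_abs y)
    rwa [map_neg] at h3
  -- general facts about the closed ideal generated by u
  have hgen : ∀ u : X, 0 < u →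
      IsClosedIdeal (myGenIdeal u).topologicalClosure ∧
      u ∈ (myGenIdeal u).topologicalClosure ∧
      ((myGenIdeal u).topologicalClosure : Set X) =
        closure {y : X | ∃ c : ℝ, |y| ≤ c • u} := by
    intro u hu
    have hcoe : ((myGenIdeal u).topologicalClosure : Set X) =
        closure ((myGenIdeal u : Submodule ℝ X) : Set X) :=
      Submodule.topologicalClosure_coe _
    have hset : ((myGenIdeal u : Submodule ℝ X) : Set X) =
        {y : X | ∃ c : ℝ, |y| ≤ c • u} := rfl
    have hSsolid : ∀ a b : X, |b| ≤ |a| → a ∈ {y : X | ∃ c : ℝ, |y| ≤ c • u} →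
        b ∈ {y : X | ∃ c : ℝ, |y| ≤ c • u} := by
      rintro a b hba ⟨c, hc⟩
      exact ⟨c, hba.trans hc⟩
    refine ⟨⟨Submodule.isClosed_topologicalClosure _, ?_⟩, ?_, by rw [hcoe, hset]⟩
    · intro a b hba ha
      have ha' : a ∈ ((myGenIdeal u).topologicalClosure : Set X) := ha
      rw [hcoe, hset] at ha'
      have hb' : b ∈ closure {y : X | ∃ c : ℝ, |y| ≤ c • u} :=
        mySolidClosure hSsolid hba ha'
      show b ∈ ((myGenIdeal u).topologicalClosure : Set X)
      rw [hcoe, hset]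
      exact hb'
    · exact Submodule.le_topologicalClosure _
        ⟨1, by rw [one_smul, myAbsOfNonneg hu.le]⟩
  -- l is nonnegative
  have hl0 : 0 ≤ l := by
    by_contra hneg
    push_neg at hneg
    have h1 : 0 ≤ l • x := heig ▸ hT x hx.le
    have h2 : l • x ≤ 0 := mySmulNonpos hneg.le hx.le
    have h3 : l • x = 0 := le_antisymm h2 h1
    have h4 : x = 0 := by
      have := congrArg (fun z => l⁻¹ • z) h3
      simpa [smul_smul, inv_mul_cancel₀ hneg.ne] using this
    exact hx.ne' h4
  -- quasi-interior
  obtain ⟨hJideal, hxJ, hJcoe⟩ := hgen x hx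
  have hJinv : ∀ y ∈ (myGenIdeal x).topologicalClosure,
      T y ∈ (myGenIdeal x).topologicalClosure := by
    have hTS : ∀ y ∈ {y : X | ∃ c : ℝ, |y| ≤ c • x},
        T y ∈ {y : X | ∃ c : ℝ, |y| ≤ c • x} := by
      rintro y ⟨c, hc⟩
      refine ⟨c * l, (habsT y).trans ?_⟩
      calc T |y| ≤ T (c • x) := hmono _ _ hc
        _ = (c * l) • x := by rw [map_smul, heig, smul_smul]
    intro y hy
    have hy' : y ∈ closure {y : X | ∃ c : ℝ, |y| ≤ c • x} := by
      have : y ∈ ((myGenIdeal x).topologicalClosure : Set X) := hy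
      rwa [hJcoe] at this
    have := myClosureInvariant T hTS y hy'
    show T y ∈ ((myGenIdeal x).topologicalClosure : Set X)
    rwa [hJcoe]
  have hJtop : (myGenIdeal x).topologicalClosure = ⊤ := by
    rcases hirr _ hJideal hJinv with h | h
    · exfalso
      rw [h] at hxJ
      exact hx.ne' (Submodule.mem_bot ℝ |>.mp hxJ)
    · exact h
  have hQI : QuasiInterior x := by
    show closure {y : X | ∃ c : ℝ, |y| ≤ c • x} = Set.univ
    rw [← hJcoe, hJtop]
    rfl
  -- l ≠ 0
  have hlne : l ≠ 0 := by
    intro hl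
    have hTx : T x = 0 := by rw [heig, hl, zero_smul]
    -- the null ideal
    set N : Submodule ℝ X :=
      { carrier := {y : X | T |y| = 0}
        zero_mem' := by simp
        add_mem' := by
          intro a b ha hb
          have h1 : T |a + b| ≤ 0 := by
            calc T |a + b| ≤ T (|a| + |b|) := hmono _ _ (abs_add_le a b)
              _ = 0 := by
                  rw [map_add]
                  rw [Set.mem_setOf_eq] at ha hb
                  rw [ha, hb, add_zero]
          exact le_antisymm h1 (hT _ (abs_nonneg _))
        smul_mem' := by
          intro r a ha
          rw [Set.mem_setOf_eq] at ha ⊢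
          have h1 : T |r • a| ≤ 0 := by
            calc T |r • a| ≤ T (|r| • |a|) := hmono _ _ (myAbsSmulLe r a)
              _ = 0 := by rw [map_smul, ha, smul_zero]
          exact le_antisymm h1 (hT _ (abs_nonneg _)) } with hNdef
    have hNclosed : IsClosedIdeal N := by
      constructor
      · exact isClosed_eq (T.continuous.comp myAbsCont) continuous_const
      · intro a b hba ha
        have ha' : T |a| = 0 := ha
        have h1 : T |b| ≤ 0 := by
          calc T |b| ≤ T |a| := hmono _ _ hba
            _ = 0 := ha'
        exact le_antisymm h1 (hT _ (abs_nonneg _))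
    have habs0 : ∀ y : X, T |y| = 0 → T y = 0 := by
      intro y hy
      have h1 : |T y| ≤ 0 := hy ▸ habsT y
      have h2 : |T y| = 0 := le_antisymm h1 (abs_nonneg _)
      have h3 : T y ≤ 0 := h2 ▸ le_abs_self (T y)
      have h4 : (0 : X) ≤ T y := by
        have h5 : -(T y) ≤ |T y| := neg_le_abs (T y)
        rw [h2] at h5
        exact neg_nonpos.mp h5
      exact le_antisymm h3 h4
    have hNinv : ∀ y ∈ N, T y ∈ N := by
      intro y hy
      have hy' : T |y| = 0 := hy
      have h2 : T y = 0 := habs0 y hy'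
      show T |T y| = 0
      rw [h2]
      simp
    have hxN : x ∈ N := by
      show T |x| = 0
      rw [myAbsOfNonneg hx.le, hTx]
    have hNtop : N = ⊤ := by
      rcases hirr N hNclosed hNinv with h | h
      · exfalso
        rw [h] at hxN
        exact hx.ne' (Submodule.mem_bot ℝ |>.mp hxN)
      · exact h
    have hTzero : ∀ y : X, T y = 0 := by
      intro y
      apply habs0
      have : y ∈ N := hNtop ▸ Submodule.mem_top
      exact this
    -- disjoint pair
    obtain ⟨u, v, hu, hv, huv⟩ := myDisjointPair hdim hx
    obtain ⟨hJu, huJu, hJucoe⟩ := hgen u hu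
    have hJuinv : ∀ y ∈ (myGenIdeal u).topologicalClosure,
        T y ∈ (myGenIdeal u).topologicalClosure := by
      intro y _
      rw [hTzero y]
      exact Submodule.zero_mem _
    have hJutop : (myGenIdeal u).topologicalClosure = ⊤ := by
      rcases hirr _ hJu hJuinv with h | h
      · exfalso
        rw [h] at huJu
        exact hu.ne' (Submodule.mem_bot ℝ |>.mp huJu)
      · exact h
    -- but v is not in the closed ideal generated by u
    set C : Set X := {z : X | |z| ⊓ v = 0} with hCdef
    have hCclosed : IsClosed C :=
      isClosed_eq (myAbsCont.inf continuous_const) continuous_const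
    have hSC : {y : X | ∃ c : ℝ, |y| ≤ c • u} ⊆ C := by
      rintro z ⟨c, hc⟩
      set c' : ℝ := max c 1 with hc'
      have hc'pos : (0 : ℝ) < c' := lt_of_lt_of_le one_pos (le_max_right c 1)
      have hc'1 : (1 : ℝ) ≤ c' := le_max_right c 1
      have hzc' : |z| ≤ c' • u := hc.trans (mySmulLeRight (le_max_left c 1) hu.le)
      set e : X := |z| ⊓ v with he
      have he0 : 0 ≤ e := le_inf (abs_nonneg z) hv.le
      have h1 : c'⁻¹ • e ≤ u := by
        calc c'⁻¹ • e ≤ c'⁻¹ • (c' • u) := mySmulLe (by positivity)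
              (le_trans inf_le_left hzc')
          _ = u := by rw [smul_smul, inv_mul_cancel₀ hc'pos.ne', one_smul]
      have h2 : c'⁻¹ • e ≤ v := by
        calc c'⁻¹ • e ≤ c'⁻¹ • v := mySmulLe (by positivity) inf_le_right
          _ ≤ 1 • v := mySmulLeRight (by
              rw [← one_div]
              exact (div_le_one hc'pos).mpr hc'1) hv.le
          _ = v := one_smul _ _
      have h3 : c'⁻¹ • e ≤ 0 := huv ▸ le_inf h1 h2
      have h4 : c'⁻¹ • e = 0 :=
        le_antisymm h3 (mySmulNonneg (by positivity) he0)
      have h5 : e = 0 := by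
        have := congrArg (fun z => c' • z) h4
        simpa [smul_smul, mul_inv_cancel₀ hc'pos.ne'] using this
      exact h5
    have hvC : v ∈ C := by
      have hvmem : v ∈ ((myGenIdeal u).topologicalClosure : Set X) := by
        rw [hJutop]; trivial
      rw [hJucoe] at hvmem
      exact closure_minimal hSC hCclosed hvmem
    have : v = 0 := by
      have h6 : |v| ⊓ v = 0 := hvC
      rwa [myAbsOfNonneg hv.le, inf_idem] at h6
    exact hv.ne' this
  exact ⟨hQI, lt_of_le_of_ne hl0 (Ne.symm hlne)⟩
end

section
/- Let T be a positive operator on a real Banach lattice such that some power T^k is σ-order-to-norm continuous, and suppose T*x* = λx* with λ ≠ 0. Then x* is σ-order continuous. -/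
open scoped ENNReal

variable {X : Type*}

open Filter in
theorem stmt11 [NormedAddCommGroup X] [Lattice X] [IsOrderedAddMonoid X] [HasSolidNorm X] [NormedSpace ℝ X]
    (T : X →L[ℝ] X) (hT : IsPositiveOp T)
    (k : ℕ) (hk : 1 ≤ k)
    (hotn : ∀ u : ℕ → X, Antitone u → IsGLB (Set.range u) 0 →
      Tendsto (fun n => ‖(T ^ k) (u n)‖) atTop (nhds 0))
    (l : ℝ) (hl : l ≠ 0) (f : StrongDual ℝ X)
    (heig : adjOp T f = l • f) :
    SigmaOrderContinuousFunc f := by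
  have hfT : ∀ x : X, f (T x) = l * f x := by
    intro x
    have := congrArg (fun g => g x) heig
    simpa [adjOp] using this
  have hpow : ∀ n : ℕ, ∀ x : X, f ((T ^ n) x) = l ^ n * f x := by
    intro n
    induction n with
    | zero => intro x; simp
    | succ m ih =>
      intro x
      have : (T ^ (m + 1)) x = (T ^ m) (T x) := by
        rw [pow_succ]; rfl
      rw [this, ih, hfT, pow_succ]; ring
  intro u hu hglb
  have hnorm := hotn u hu hglb
  have h1 : Tendsto (fun n => f ((T ^ k) (u n))) atTop (nhds 0) := by
    refine squeeze_zero_norm (a := fun n => ‖f‖ * ‖(T ^ k) (u n)‖) (fun n => f.le_opNorm _) ?_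
    simpa using hnorm.const_mul ‖f‖
  have h2 : (fun n => f (u n)) = fun n => (l ^ k)⁻¹ * f ((T ^ k) (u n)) := by
    funext n
    rw [hpow k (u n)]
    field_simp
  rw [h2]
  simpa using h1.const_mul (l ^ k)⁻¹
end

section
/- Let 0 ≤ S ≤ T be positive operators on a real Banach lattice with r(T) = r(S) and ST = TS. Suppose Sx₀ = r(S)x₀ and S*x₀* = r(S)x₀* for some x₀ > 0 and x₀* > 0, and that S is ideal irreducible. Then T = S. -/
open scoped ENNReal

variable {X : Type*}

section AuxStmt19

variable [NormedAddCommGroup X] [Lattice X] [IsOrderedAddMonoid X] [HasSolidNorm X]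
    [NormedSpace ℝ X]

private lemma aux19_half_smul_nonneg {x : X} (hx : 0 ≤ x) (k : ℕ) :
    0 ≤ ((2:ℝ)^k)⁻¹ • x := by
  induction k with
  | zero => simpa using hx
  | succ k ih =>
      apply nsmul_two_semiclosed
      have h2 : (2:ℕ) • (((2:ℝ)^(k+1))⁻¹ • x) = ((2:ℝ)^k)⁻¹ • x := by
        rw [← Nat.cast_smul_eq_nsmul ℝ, smul_smul]
        congr 1
        push_cast
        rw [pow_succ]
        field_simp
      rw [h2]; exact ih

private lemma aux19_smul_nonneg {c : ℝ} {x : X} (hc : 0 ≤ c) (hx : 0 ≤ x) :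
    0 ≤ c • x := by
  set q : ℕ → ℝ := fun k => (⌈c * 2^k⌉₊ : ℝ) / 2^k with hq
  have hq_nonneg : ∀ k, 0 ≤ q k • x := by
    intro k
    have : q k • x = (⌈c * 2^k⌉₊ : ℕ) • (((2:ℝ)^k)⁻¹ • x) := by
      rw [← Nat.cast_smul_eq_nsmul ℝ, smul_smul]
      simp only [hq]
      rw [div_eq_mul_inv]
    rw [this]
    exact nsmul_nonneg (aux19_half_smul_nonneg hx k) _
  have h2k : ∀ k : ℕ, (0:ℝ) < 2^k := fun k => by positivity
  have hlb : ∀ k, c ≤ q k := by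
    intro k
    rw [hq, le_div_iff₀ (h2k k)]
    exact Nat.le_ceil _
  have hub : ∀ k, q k ≤ c + ((2:ℝ)^k)⁻¹ := by
    intro k
    rw [hq, div_le_iff₀ (h2k k)]
    have := (Nat.ceil_lt_add_one (by positivity : (0:ℝ) ≤ c * 2^k)).le
    calc (⌈c * 2^k⌉₊ : ℝ) ≤ c * 2^k + 1 := this
    _ = (c + ((2:ℝ)^k)⁻¹) * 2^k := by field_simp
  have htend : Filter.Tendsto q Filter.atTop (nhds c) := by
    have hub' : Filter.Tendsto (fun k : ℕ => c + ((2:ℝ)^k)⁻¹) Filter.atTop (nhds (c + 0)) := by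
      apply Filter.Tendsto.const_add
      have : (fun k : ℕ => ((2:ℝ)^k)⁻¹) = fun k : ℕ => ((2:ℝ)⁻¹)^k := by
        funext k; rw [inv_pow]
      rw [this]
      exact tendsto_pow_atTop_nhds_zero_of_lt_one (by norm_num) (by norm_num)
    rw [add_zero] at hub'
    exact tendsto_of_tendsto_of_tendsto_of_le_of_le tendsto_const_nhds hub' hlb hub
  have hsm : Filter.Tendsto (fun k => q k • x) Filter.atTop (nhds (c • x)) :=
    htend.smul_const x
  exact ge_of_tendsto hsm (Filter.Eventually.of_forall hq_nonneg)

private lemma aux19_smul_mono {c : ℝ} {x y : X} (hc : 0 ≤ c) (h : x ≤ y) :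
    c • x ≤ c • y := by
  have := aux19_smul_nonneg hc (sub_nonneg.2 h)
  rw [smul_sub] at this
  exact sub_nonneg.1 this

private lemma aux19_smul_mono_left {c d : ℝ} {x : X} (h : c ≤ d) (hx : 0 ≤ x) :
    c • x ≤ d • x := by
  have := aux19_smul_nonneg (sub_nonneg.2 h) hx
  rw [sub_smul] at this
  exact sub_nonneg.1 this

private lemma aux19_smul_sup {c : ℝ} (hc : 0 ≤ c) (a b : X) :
    c • (a ⊔ b) = (c • a) ⊔ (c • b) := by
  rcases hc.eq_or_lt with h | h
  · simp [← h]
  · apply le_antisymm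
    · have h1 : a ⊔ b ≤ c⁻¹ • ((c • a) ⊔ (c • b)) := by
        apply sup_le
        · have := aux19_smul_mono (inv_nonneg.2 hc) (le_sup_left (a := c • a) (b := c • b))
          rwa [smul_smul, inv_mul_cancel₀ h.ne', one_smul] at this
        · have := aux19_smul_mono (inv_nonneg.2 hc) (le_sup_right (a := c • a) (b := c • b))
          rwa [smul_smul, inv_mul_cancel₀ h.ne', one_smul] at this
      have := aux19_smul_mono hc h1
      rwa [smul_smul, mul_inv_cancel₀ h.ne', one_smul] at this
    · exact sup_le (aux19_smul_mono hc le_sup_left) (aux19_smul_mono hc le_sup_right)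

private lemma aux19_abs_smul (c : ℝ) (x : X) : |c • x| = |c| • |x| := by
  rcases le_total 0 c with h | h
  · rw [abs_of_nonneg h]
    show (c • x) ⊔ -(c • x) = c • (x ⊔ -x)
    rw [aux19_smul_sup h, smul_neg]
  · rw [abs_of_nonpos h]
    have : c • x = -((-c) • x) := by rw [neg_smul, neg_neg]
    rw [this, abs_neg]
    show ((-c) • x) ⊔ -((-c) • x) = (-c) • (x ⊔ -x)
    rw [aux19_smul_sup (by linarith), smul_neg]

end AuxStmt19

section AuxStmt19b

variable [NormedAddCommGroup X] [Lattice X] [IsOrderedAddMonoid X] [HasSolidNorm X]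
    [NormedSpace ℝ X]

private lemma aux19_riesz {a b u : X} (ha : 0 ≤ a) (hb : 0 ≤ b) (hu : 0 ≤ u) :
    (a + b) ⊓ u ≤ (a ⊓ u) + (b ⊓ u) := by
  have h1 : (a ⊓ u) + (b ⊓ u) = (((a ⊓ u) + b) ⊓ ((a ⊓ u) + u)) := add_inf _ _ _
  have h2 : (a ⊓ u) + b = (a + b) ⊓ (u + b) := inf_add _ _ _
  have h3 : (a ⊓ u) + u = (a + u) ⊓ (u + u) := inf_add _ _ _
  rw [h1, h2, h3]
  refine le_inf (le_inf inf_le_left ?_) (le_inf ?_ ?_)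
  · exact inf_le_right.trans (le_add_of_nonneg_right hb)
  · exact inf_le_right.trans (le_add_of_nonneg_left ha)
  · exact inf_le_right.trans (le_add_of_nonneg_left hu)

private lemma aux19_inf_nsmul {u v : X} (hu : 0 ≤ u) (hv : 0 ≤ v) (n : ℕ) :
    u ⊓ (n • v) ≤ n • (u ⊓ v) := by
  induction n with
  | zero => simpa using inf_le_right
  | succ n ih =>
      have h1 : u ⊓ ((n+1) • v) = u ⊓ (n • v + v) := by rw [succ_nsmul]
      have h2 : (n • v + v) ⊓ u ≤ ((n • v) ⊓ u) + (v ⊓ u) :=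
        aux19_riesz (nsmul_nonneg hv n) hv hu
      rw [h1, inf_comm]
      refine h2.trans ?_
      rw [inf_comm (n • v) u, inf_comm v u, succ_nsmul]
      exact add_le_add_left ih _

private lemma aux19_disjoint_smul {u v : X} (hu : 0 ≤ u) (hv : 0 ≤ v)
    (h : u ⊓ v = 0) {c : ℝ} (hc : 0 ≤ c) : u ⊓ (c • v) = 0 := by
  refine le_antisymm ?_ (le_inf hu (aux19_smul_nonneg hc hv))
  calc u ⊓ (c • v) ≤ u ⊓ ((⌈c⌉₊ : ℝ) • v) :=
        inf_le_inf_left u (aux19_smul_mono_left (Nat.le_ceil c) hv)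
  _ = u ⊓ (⌈c⌉₊ • v) := by rw [Nat.cast_smul_eq_nsmul]
  _ ≤ ⌈c⌉₊ • (u ⊓ v) := aux19_inf_nsmul hu hv _
  _ = 0 := by rw [h, smul_zero]

private lemma aux19_op_mono {S : X →L[ℝ] X} (hS : IsPositiveOp S)
    {a b : X} (h : a ≤ b) : S a ≤ S b := by
  have := hS (b - a) (sub_nonneg.2 h)
  rw [map_sub] at this
  exact sub_nonneg.1 this

private lemma aux19_op_abs {S : X →L[ℝ] X} (hS : IsPositiveOp S) (x : X) :
    |S x| ≤ S |x| := by
  refine abs_le'.2 ⟨aux19_op_mono hS (le_abs_self x), ?_⟩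
  have := aux19_op_mono hS (neg_le.mp (neg_le_abs x))
  rw [map_neg] at this
  exact neg_le.mp this

private lemma aux19_continuous_abs : Continuous (fun x : X => |x|) :=
  continuous_id.sup continuous_neg

private lemma aux19_abs_le_zero {a : X} (h : |a| ≤ 0) : a = 0 :=
  le_antisymm ((le_abs_self a).trans h) (neg_nonpos.1 ((neg_le_abs a).trans h))

/-- The null ideal of a positive operator. -/
private def aux19_nullSubmodule (S : X →L[ℝ] X) (hS : IsPositiveOp S) : Submodule ℝ X where
  carrier := {x | S |x| = 0}
  zero_mem' := by simp
  add_mem' := by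
    intro a b ha hb
    refine le_antisymm ?_ (hS _ (abs_nonneg _))
    calc S |a + b| ≤ S (|a| + |b|) := aux19_op_mono hS (abs_add_le a b)
    _ = 0 := by rw [map_add, ha, hb, add_zero]
  smul_mem' := by
    intro c x hx
    show S |c • x| = 0
    rw [aux19_abs_smul, map_smul, hx, smul_zero]

private lemma aux19_nullSubmodule_mem {S : X →L[ℝ] X} (hS : IsPositiveOp S) (x : X) :
    x ∈ aux19_nullSubmodule S hS ↔ S |x| = 0 := Iff.rfl

private lemma aux19_nullSubmodule_closedIdeal (S : X →L[ℝ] X) (hS : IsPositiveOp S) :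
    IsClosedIdeal (aux19_nullSubmodule S hS) := by
  constructor
  · have : (aux19_nullSubmodule S hS : Set X) = (fun x : X => S |x|) ⁻¹' {0} := rfl
    rw [this]
    exact IsClosed.preimage (S.continuous.comp aux19_continuous_abs) isClosed_singleton
  · intro x y h hx
    refine le_antisymm ?_ (hS _ (abs_nonneg _))
    calc S |y| ≤ S |x| := aux19_op_mono hS h
    _ = 0 := hx

/-- The principal ideal generated by `v`. -/
private def aux19_principalIdeal (v : X) : Submodule ℝ X where
  carrier := {x | ∃ c : ℝ, |x| ≤ c • v}
  zero_mem' := ⟨0, by simp⟩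
  add_mem' := by
    rintro a b ⟨c, hc⟩ ⟨d, hd⟩
    exact ⟨c + d, (abs_add_le a b).trans (by rw [add_smul]; exact add_le_add hc hd)⟩
  smul_mem' := by
    rintro a x ⟨c, hc⟩
    refine ⟨|a| * c, ?_⟩
    rw [aux19_abs_smul, ← smul_smul]
    exact aux19_smul_mono (abs_nonneg a) hc

private lemma aux19_closure_solid {I : Submodule ℝ X}
    (hsolid : ∀ a b : X, |b| ≤ |a| → a ∈ I → b ∈ I)
    {x y : X} (h : |y| ≤ |x|) (hx : x ∈ closure (I : Set X)) :
    y ∈ closure (I : Set X) := by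
  obtain ⟨u, hu_mem, hu_lim⟩ := mem_closure_iff_seq_limit.1 hx
  set w : ℕ → X := fun n => (y ⊓ |u n|) ⊔ (-|u n|) with hw
  have hw_mem : ∀ n, w n ∈ I := by
    intro n
    refine hsolid (u n) _ (abs_le'.2 ⟨?_, neg_le.mpr le_sup_right⟩) (hu_mem n)
    exact sup_le inf_le_right (neg_le_self (abs_nonneg _))
  have habs : Filter.Tendsto (fun n => |u n|) Filter.atTop (nhds |x|) :=
    (aux19_continuous_abs.tendsto x).comp hu_lim
  have hw_lim : Filter.Tendsto w Filter.atTop (nhds ((y ⊓ |x|) ⊔ (-|x|))) :=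
    (Filter.Tendsto.inf_nhds tendsto_const_nhds habs).sup_nhds habs.neg
  have heq : (y ⊓ |x|) ⊔ (-|x|) = y := by
    rw [inf_eq_left.2 ((le_abs_self y).trans h)]
    exact sup_eq_left.2 ((neg_le_neg h).trans (neg_le.mp (neg_le_abs y)))
  rw [heq] at hw_lim
  exact mem_closure_of_tendsto hw_lim (Filter.Eventually.of_forall hw_mem)

end AuxStmt19b



section AuxStmt19c

variable [NormedAddCommGroup X] [Lattice X] [IsOrderedAddMonoid X] [HasSolidNorm X]
    [NormedSpace ℝ X]

/-- The null ideal of a positive functional. -/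
private def aux19_funcNull (f₀ : StrongDual ℝ X) (hf₀ : IsPositiveFunc f₀) :
    Submodule ℝ X where
  carrier := {x | f₀ |x| = 0}
  zero_mem' := by simp
  add_mem' := by
    intro a b ha hb
    have hmono : f₀ |a + b| ≤ f₀ (|a| + |b|) := by
      have := hf₀ _ (sub_nonneg.2 (abs_add_le a b))
      rw [map_sub] at this
      linarith
    refine le_antisymm ?_ (hf₀ _ (abs_nonneg _))
    calc f₀ |a + b| ≤ f₀ (|a| + |b|) := hmono
    _ = 0 := by rw [map_add, ha, hb, add_zero]
  smul_mem' := by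
    intro c x hx
    show f₀ |c • x| = 0
    rw [aux19_abs_smul, map_smul, smul_eq_mul]
    have : f₀ |x| = 0 := hx
    rw [this, mul_zero]

private lemma aux19_funcNull_closedIdeal (f₀ : StrongDual ℝ X)
    (hf₀ : IsPositiveFunc f₀) : IsClosedIdeal (aux19_funcNull f₀ hf₀) := by
  constructor
  · have : (aux19_funcNull f₀ hf₀ : Set X) = (fun x : X => f₀ |x|) ⁻¹' {0} := rfl
    rw [this]
    exact IsClosed.preimage (f₀.continuous.comp aux19_continuous_abs) isClosed_singleton
  · intro x y h hx
    have hx' : f₀ |x| = 0 := hx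
    refine le_antisymm ?_ (hf₀ _ (abs_nonneg _))
    have hmono : f₀ |y| ≤ f₀ |x| := by
      have := hf₀ _ (sub_nonneg.2 h)
      rw [map_sub] at this
      linarith
    rw [hx'] at hmono
    exact hmono

/-- The "band" of elements disjoint from `u`. -/
private def aux19_disjBand (u : X) (hu : 0 ≤ u) : Submodule ℝ X where
  carrier := {x | |x| ⊓ u = 0}
  zero_mem' := by
    show |(0:X)| ⊓ u = 0
    rw [abs_zero]
    exact inf_eq_left.2 hu
  add_mem' := by
    intro a b ha hb
    have ha' : |a| ⊓ u = 0 := ha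
    have hb' : |b| ⊓ u = 0 := hb
    refine le_antisymm ?_ (le_inf (abs_nonneg _) hu)
    calc |a + b| ⊓ u ≤ (|a| + |b|) ⊓ u := inf_le_inf_right u (abs_add_le a b)
    _ ≤ (|a| ⊓ u) + (|b| ⊓ u) := aux19_riesz (abs_nonneg a) (abs_nonneg b) hu
    _ = 0 := by rw [ha', hb', add_zero]
  smul_mem' := by
    intro c x hx
    have hx' : |x| ⊓ u = 0 := hx
    show |c • x| ⊓ u = 0
    rw [aux19_abs_smul, inf_comm]
    exact aux19_disjoint_smul hu (abs_nonneg x) (by rw [inf_comm]; exact hx') (abs_nonneg c)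

private lemma aux19_disjBand_closedIdeal (u : X) (hu : 0 ≤ u) :
    IsClosedIdeal (aux19_disjBand u hu) := by
  constructor
  · have : (aux19_disjBand u hu : Set X) = (fun x : X => |x| ⊓ u) ⁻¹' {0} := rfl
    rw [this]
    exact IsClosed.preimage (aux19_continuous_abs.inf continuous_const) isClosed_singleton
  · intro x y h hx
    have hx' : |x| ⊓ u = 0 := hx
    refine le_antisymm ?_ (le_inf (abs_nonneg _) hu)
    calc |y| ⊓ u ≤ |x| ⊓ u := inf_le_inf_right u h
    _ = 0 := hx'

/-- If `v > 0` is an eigenvector of an ideal irreducible positive operator, then any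
positive element disjoint from `v` is zero. -/
private lemma aux19_eigen_weakunit {S : X →L[ℝ] X} (hS : IsPositiveOp S)
    (hirr : IdealIrreducible S) {v : X} (hv : 0 < v) {c₀ : ℝ} (heig : S v = c₀ • v) :
    ∀ u : X, 0 ≤ u → u ⊓ v = 0 → u = 0 := by
  intro u hu huv
  set I := aux19_principalIdeal (X := X) v with hI
  have hmap : ∀ x ∈ I, S x ∈ I := by
    rintro x ⟨c, hc⟩
    refine ⟨c * c₀, ?_⟩
    calc |S x| ≤ S |x| := aux19_op_abs hS x
    _ ≤ S (c • v) := aux19_op_mono hS hc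
    _ = (c * c₀) • v := by rw [map_smul, heig, smul_smul]
  have hsolid : ∀ a b : X, |b| ≤ |a| → a ∈ I → b ∈ I := by
    rintro a b h ⟨c, hc⟩; exact ⟨c, h.trans hc⟩
  set J := I.topologicalClosure with hJ
  have hmemJ : ∀ x : X, x ∈ J ↔ x ∈ closure (I : Set X) := by
    intro x
    rw [← SetLike.mem_coe, Submodule.topologicalClosure_coe]
  have hJci : IsClosedIdeal J := by
    constructor
    · exact Submodule.isClosed_topologicalClosure I
    · intro a b h ha
      rw [hmemJ] at ha ⊢
      exact aux19_closure_solid hsolid h ha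
  have hJinv : ∀ x ∈ J, S x ∈ J := by
    intro x hx
    rw [hmemJ] at hx ⊢
    have h1 : S '' closure (I : Set X) ⊆ closure (S '' (I : Set X)) :=
      image_closure_subset_closure_image S.continuous
    have h2 : closure (S '' (I : Set X)) ⊆ closure (I : Set X) :=
      closure_mono (Set.image_subset_iff.2 hmap)
    exact h2 (h1 ⟨x, hx, rfl⟩)
  have hvI : v ∈ I := ⟨1, by rw [abs_of_nonneg hv.le, one_smul]⟩
  rcases hirr J hJci hJinv with hbot | htop
  · exfalso
    have : v ∈ J := (hmemJ v).2 (subset_closure hvI)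
    rw [hbot, Submodule.mem_bot] at this
    exact hv.ne' this
  · have huJ : u ∈ closure (I : Set X) := by
      rw [← hmemJ, htop]; exact Submodule.mem_top
    set K : Set X := {x | u ⊓ |x| = 0} with hK
    have hKclosed : IsClosed K := by
      have : K = (fun x : X => u ⊓ |x|) ⁻¹' {0} := rfl
      rw [this]
      exact IsClosed.preimage (continuous_const.inf aux19_continuous_abs) isClosed_singleton
    have hIK : (I : Set X) ⊆ K := by
      rintro x ⟨c, hc⟩
      refine le_antisymm ?_ (le_inf hu (abs_nonneg x))
      calc u ⊓ |x| ≤ u ⊓ (|c| • v) := by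
            refine inf_le_inf_left u (hc.trans ?_)
            exact aux19_smul_mono_left (le_abs_self c) hv.le
      _ = 0 := aux19_disjoint_smul hu hv.le huv (abs_nonneg c)
    have huK : u ∈ K := closure_minimal hIK hKclosed huJ
    have : u ⊓ |u| = 0 := huK
    rwa [abs_of_nonneg hu, inf_idem] at this

/-- A totally ordered Banach lattice with a positive element has rank at most one. -/
private lemma aux19_rank_le_one {v : X} (hv : 0 < v)
    (htot : ∀ x : X, 0 ≤ x ∨ x ≤ 0) : Module.rank ℝ X ≤ 1 := by
  rw [rank_le_one_iff]
  refine ⟨v, fun w => ?_⟩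
  have htot' : ∀ a b : X, a ≤ b ∨ b ≤ a := by
    intro a b
    rcases htot (b - a) with h | h
    · exact Or.inl (sub_nonneg.1 h)
    · exact Or.inr (sub_nonpos.1 h)
  have hvnorm : 0 < ‖v‖ := norm_pos_iff.2 hv.ne'
  set A := {t : ℝ | t • v ≤ w} with hA
  have hAne : A.Nonempty := by
    by_contra hne
    rw [Set.not_nonempty_iff_eq_empty] at hne
    have hall : ∀ t : ℝ, w ≤ t • v := by
      intro t
      rcases htot' (t • v) w with h1 | h1
      · exfalso
        have : t ∈ A := h1
        rw [hne] at this
        exact this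
      · exact h1
    have hkey : ∀ n : ℕ, (n : ℝ) * ‖v‖ ≤ ‖w‖ := by
      intro n
      have h1 : w ≤ (-(n : ℝ)) • v := hall _
      have h2 : (n : ℝ) • v ≤ -w := by
        rw [neg_smul] at h1
        exact le_neg.mp h1
      have h3 : (0:X) ≤ (n : ℝ) • v := aux19_smul_nonneg (Nat.cast_nonneg n) hv.le
      have h4 : ‖(n : ℝ) • v‖ ≤ ‖-w‖ := by
        apply norm_le_norm_of_abs_le_abs
        rw [abs_of_nonneg h3, abs_of_nonneg (h3.trans h2)]
        exact h2
      rw [norm_neg, norm_smul, Real.norm_eq_abs, abs_of_nonneg (Nat.cast_nonneg n)] at h4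
      exact h4
    obtain ⟨n, hn⟩ := exists_nat_gt (‖w‖ / ‖v‖)
    have := hkey n
    rw [← le_div_iff₀ hvnorm] at this
    linarith
  have hAbdd : BddAbove A := by
    refine ⟨max 0 (‖w‖ / ‖v‖), ?_⟩
    intro t ht
    rcases le_total t 0 with h | h
    · exact h.trans (le_max_left _ _)
    · have ht' : t • v ≤ w := ht
      have h3 : (0:X) ≤ t • v := aux19_smul_nonneg h hv.le
      have h4 : ‖t • v‖ ≤ ‖w‖ := by
        apply norm_le_norm_of_abs_le_abs
        rw [abs_of_nonneg h3, abs_of_nonneg (h3.trans ht')]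
        exact ht'
      rw [norm_smul, Real.norm_eq_abs, abs_of_nonneg h] at h4
      refine le_trans ?_ (le_max_right _ _)
      rwa [le_div_iff₀ hvnorm]
  have hAclosed : IsClosed A := by
    have : A = {t : ℝ | t • v ≤ w} := rfl
    rw [this]
    exact isClosed_le (continuous_id.smul continuous_const) continuous_const
  set t₀ := sSup A with ht₀
  have ht₀A : t₀ ∈ A := hAclosed.csSup_mem hAne hAbdd
  have hle1 : t₀ • v ≤ w := ht₀A
  have hle2 : w ≤ t₀ • v := by
    have h2 : ∀ n : ℕ, w ≤ (t₀ + 1/(n+1)) • v := by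
      intro n
      have hnot : (t₀ + 1/(n+1)) ∉ A := by
        intro hmem
        have := le_csSup hAbdd hmem
        have hpos : (0:ℝ) < 1/((n:ℝ)+1) := by positivity
        rw [← ht₀] at this
        linarith
      rcases htot' ((t₀ + 1/(n+1)) • v) w with h1 | h1
      · exact absurd h1 hnot
      · exact h1
    have hlim : Filter.Tendsto (fun n : ℕ => (t₀ + 1/(n+1)) • v) Filter.atTop
        (nhds (t₀ • v)) := by
      have h1 : Filter.Tendsto (fun n : ℕ => t₀ + 1/((n:ℝ)+1)) Filter.atTop (nhds (t₀ + 0)) :=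
        Filter.Tendsto.const_add _ tendsto_one_div_add_atTop_nhds_zero_nat
      rw [add_zero] at h1
      exact h1.smul_const v
    exact ge_of_tendsto hlim (Filter.Eventually.of_forall h2)
  exact ⟨t₀, le_antisymm hle1 hle2⟩

end AuxStmt19c

theorem stmt19 [NormedAddCommGroup X] [Lattice X] [IsOrderedAddMonoid X] [HasSolidNorm X]
    [NormedSpace ℝ X]
    (hdim : 1 < Module.rank ℝ X)
    (S T : X →L[ℝ] X) (hS : IsPositiveOp S)
    (hST : ∀ x : X, 0 ≤ x → S x ≤ T x) (hT : IsPositiveOp T)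
    (hr : spectralRadius ℝ T = spectralRadius ℝ S)
    (hcomm : S * T = T * S)
    (x₀ : X) (hx₀ : 0 < x₀)
    (heig : S x₀ = (spectralRadius ℝ S).toReal • x₀)
    (f₀ : StrongDual ℝ X) (hf₀ : IsPositiveFunc f₀) (hf₀0 : f₀ ≠ 0)
    (heig' : adjOp S f₀ = (spectralRadius ℝ S).toReal • f₀)
    (hirr : IdealIrreducible S) :
    T = S := by
  classical
  set r : ℝ := (spectralRadius ℝ S).toReal with hrdef
  have hr0 : 0 ≤ r := ENNReal.toReal_nonneg
  have hcomm' : ∀ x : X, S (T x) = T (S x) := by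
    intro x
    have := congrArg (fun A : X →L[ℝ] X => A x) hcomm
    simpa [ContinuousLinearMap.mul_apply] using this
  have hadj : ∀ x : X, f₀ (S x) = r * f₀ x := by
    intro x
    have := congrArg (fun g : StrongDual ℝ X => g x) heig'
    simpa [adjOp, ContinuousLinearMap.smul_apply, smul_eq_mul] using this
  have hmono_f : ∀ {a b : X}, a ≤ b → f₀ a ≤ f₀ b := by
    intro a b h
    have := hf₀ (b - a) (sub_nonneg.2 h)
    rw [map_sub] at this
    linarith
  -- f₀ is strictly positive
  have hstrict : ∀ x : X, 0 < x → 0 < f₀ x := by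
    set N := aux19_funcNull f₀ hf₀ with hN
    have hNinv : ∀ x ∈ N, S x ∈ N := by
      intro x hx
      have hx' : f₀ |x| = 0 := hx
      show f₀ |S x| = 0
      refine le_antisymm ?_ (hf₀ _ (abs_nonneg _))
      calc f₀ |S x| ≤ f₀ (S |x|) := hmono_f (aux19_op_abs hS x)
      _ = r * f₀ |x| := hadj _
      _ = 0 := by rw [hx', mul_zero]
    rcases hirr N (aux19_funcNull_closedIdeal f₀ hf₀) hNinv with hbot | htop
    · intro x hx
      rcases (hf₀ x hx.le).eq_or_lt with h | h
      · exfalso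
        have hxN : x ∈ N := by
          show f₀ |x| = 0
          rw [abs_of_nonneg hx.le, ← h]
        rw [hbot, Submodule.mem_bot] at hxN
        exact hx.ne' hxN
      · exact h
    · exfalso
      apply hf₀0
      ext x
      have hzero : ∀ z : X, 0 ≤ z → f₀ z = 0 := by
        intro z hz
        have : z ∈ N := by rw [htop]; exact Submodule.mem_top
        have h1 : f₀ |z| = 0 := this
        rwa [abs_of_nonneg hz] at h1
      have h1 : f₀ (x⁺) = 0 := hzero _ (posPart_nonneg x)
      have h2 : f₀ (x⁻) = 0 := hzero _ (negPart_nonneg x)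
      have : f₀ (x⁺ - x⁻) = 0 := by rw [map_sub, h1, h2, sub_zero]
      rwa [posPart_sub_negPart] at this
  rcases hr0.eq_or_lt with hrzero | hrpos
  · -- case r = 0 : contradiction
    exfalso
    have hSx0 : S x₀ = 0 := by rw [heig, ← hrzero, zero_smul]
    have hSzero : ∀ x : X, S x = 0 := by
      set N := aux19_nullSubmodule S hS with hN
      have hofmem : ∀ x : X, x ∈ N → S x = 0 := by
        intro x hx
        have hx' : S |x| = 0 := hx
        have h1 : |S x| ≤ S |x| := aux19_op_abs hS x
        rw [hx'] at h1
        exact aux19_abs_le_zero h1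
      have hNinv : ∀ x ∈ N, S x ∈ N := by
        intro x hx
        rw [hofmem x hx]
        exact N.zero_mem
      rcases hirr N (aux19_nullSubmodule_closedIdeal S hS) hNinv with hbot | htop
      · exfalso
        have hx₀N : x₀ ∈ N := by
          show S |x₀| = 0
          rw [abs_of_nonneg hx₀.le, hSx0]
        rw [hbot, Submodule.mem_bot] at hx₀N
        exact hx₀.ne' hx₀N
      · intro x
        exact hofmem x (by rw [htop]; exact Submodule.mem_top)
    by_cases hdisj : ∃ u v : X, 0 < u ∧ 0 < v ∧ u ⊓ v = 0
    · obtain ⟨u, v, hu, hv, huv⟩ := hdisj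
      set J := aux19_disjBand u hu.le with hJ
      have hJinv : ∀ x ∈ J, S x ∈ J := by
        intro x _
        rw [hSzero x]
        exact J.zero_mem
      rcases hirr J (aux19_disjBand_closedIdeal u hu.le) hJinv with hbot | htop
      · have hvJ : v ∈ J := by
          show |v| ⊓ u = 0
          rw [abs_of_nonneg hv.le, inf_comm]
          exact huv
        rw [hbot, Submodule.mem_bot] at hvJ
        exact hv.ne' hvJ
      · have huJ : u ∈ J := by rw [htop]; exact Submodule.mem_top
        have h1 : |u| ⊓ u = 0 := huJ
        rw [abs_of_nonneg hu.le, inf_idem] at h1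
        exact hu.ne' h1
    · push_neg at hdisj
      have htot : ∀ x : X, 0 ≤ x ∨ x ≤ 0 := by
        intro x
        by_cases h1 : x⁺ = 0
        · exact Or.inr (posPart_eq_zero.1 h1)
        by_cases h2 : x⁻ = 0
        · exact Or.inl (negPart_eq_zero.1 h2)
        exfalso
        have hp : 0 < x⁺ := (posPart_nonneg x).lt_of_ne (Ne.symm h1)
        have hn : 0 < x⁻ := (negPart_nonneg x).lt_of_ne (Ne.symm h2)
        exact hdisj _ _ hp hn (posPart_inf_negPart_eq_zero x)
      exact absurd (aux19_rank_le_one hx₀ htot) (not_le.2 hdim)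
  · -- case r > 0
    have hfin : spectralRadius ℝ S ≠ ⊤ := by
      intro h
      rw [hrdef, h, ENNReal.toReal_top] at hrpos
      exact lt_irrefl _ hrpos
    have hf₀x₀ : 0 < f₀ x₀ := hstrict x₀ hx₀
    -- any eigenvector of S for r is a multiple of x₀
    have hkey : ∀ w : X, S w = r • w → f₀ w = 0 → w = 0 := by
      intro w hw hfw
      have habs : S |w| = r • |w| := by
        have h1 : r • |w| ≤ S |w| := by
          have h2 : |S w| ≤ S |w| := aux19_op_abs hS w
          rwa [hw, aux19_abs_smul, abs_of_nonneg hr0] at h2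
        have h2 : f₀ (S |w| - r • |w|) = 0 := by
          rw [map_sub, hadj, map_smul, smul_eq_mul, sub_self]
        by_contra hne
        have hpos : 0 < S |w| - r • |w| := by
          rcases (sub_nonneg.2 h1).eq_or_lt with h | h
          · exact absurd (sub_eq_zero.1 h.symm) hne
          · exact h
        exact (hstrict _ hpos).ne' h2
      have hu₁ : S (|w| - w) = r • (|w| - w) := by rw [map_sub, habs, hw, smul_sub]
      have hu₂ : S (|w| + w) = r • (|w| + w) := by rw [map_add, habs, hw, smul_add]
      have h1n : (0:X) ≤ |w| - w := sub_nonneg.2 (le_abs_self w)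
      have h2n : (0:X) ≤ |w| + w := by
        calc (0:X) = -w + w := (neg_add_cancel w).symm
        _ ≤ |w| + w := add_le_add_left (neg_le_abs w) w
      have hdisj12 : (|w| - w) ⊓ (|w| + w) = 0 := by
        have h3 : (|w| + -w) ⊓ (|w| + w) = |w| + (-w ⊓ w) := (add_inf _ _ _).symm
        rw [sub_eq_add_neg, h3]
        have h4 : -w ⊓ w = -|w| := by
          have h5 : -(w ⊔ -w) = -w ⊓ -(-w) := neg_sup w (-w)
          rw [neg_neg] at h5
          exact h5.symm
        rw [h4, add_neg_cancel]
      rcases h2n.eq_or_lt with h2z | h2p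
      · -- |w| + w = 0, so w ≤ 0
        have hwle : w ≤ 0 := by
          have hw' : w = -|w| := by
            rw [eq_neg_iff_add_eq_zero, add_comm]
            exact h2z.symm
          rw [hw']
          exact neg_nonpos.2 (abs_nonneg w)
        rcases hwle.eq_or_lt with h | h
        · exact h.symm ▸ rfl
        · exfalso
          have hnegpos : 0 < -w := neg_pos.2 h
          have := hstrict _ hnegpos
          rw [map_neg, hfw, neg_zero] at this
          exact lt_irrefl _ this
      · -- |w| + w > 0 is an eigenvector, so |w| - w = 0, i.e. w ≥ 0
        have hzero1 : |w| - w = 0 :=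
          aux19_eigen_weakunit hS hirr h2p hu₂ _ h1n hdisj12
        have hwge : 0 ≤ w := by
          have hw' : w = |w| := (sub_eq_zero.1 hzero1).symm
          rw [hw']
          exact abs_nonneg w
        rcases hwge.eq_or_lt with h | h
        · exact h.symm
        · exfalso
          exact (hstrict _ h).ne' hfw
    have huniq : ∀ z : X, S z = r • z → z = (f₀ z / f₀ x₀) • x₀ := by
      intro z hz
      set t := f₀ z / f₀ x₀ with ht
      have hzt : S (z - t • x₀) = r • (z - t • x₀) := by
        rw [map_sub, hz, map_smul, heig, smul_sub, smul_comm t r x₀]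
      have hf : f₀ (z - t • x₀) = 0 := by
        rw [map_sub, map_smul, smul_eq_mul, ht, div_mul_cancel₀ _ hf₀x₀.ne', sub_self]
      have := hkey _ hzt hf
      have := sub_eq_zero.1 this
      rw [this]
    have hTx₀eig : S (T x₀) = r • (T x₀) := by
      rw [hcomm' x₀, heig, map_smul]
    set t := f₀ (T x₀) / f₀ x₀ with ht
    have hTx₀ : T x₀ = t • x₀ := huniq _ hTx₀eig
    have htr : r ≤ t := by
      have h1 : f₀ (S x₀) ≤ f₀ (T x₀) := hmono_f (hST x₀ hx₀.le)
      rw [hadj x₀] at h1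
      rw [ht, le_div_iff₀ hf₀x₀]
      exact h1
    have hts : t ∈ spectrum ℝ T := by
      rw [spectrum.mem_iff]
      intro hunit
      obtain ⟨u, hu⟩ := hunit
      have h0 : (algebraMap ℝ (X →L[ℝ] X) t - T) x₀ = 0 := by
        rw [ContinuousLinearMap.sub_apply, Algebra.algebraMap_eq_smul_one,
          ContinuousLinearMap.smul_apply, ContinuousLinearMap.one_apply, hTx₀, sub_self]
      have hx0 : x₀ = 0 := by
        have h1 : (↑u⁻¹ * ↑u : X →L[ℝ] X) x₀ = x₀ := by
          rw [u.inv_mul, ContinuousLinearMap.one_apply]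
        rw [ContinuousLinearMap.mul_apply, hu, h0, map_zero] at h1
        exact h1.symm
      exact hx₀.ne' hx0
    have htle : t ≤ r := by
      have hb : (‖t‖₊ : ℝ≥0∞) ≤ spectralRadius ℝ T := by
        show (‖t‖₊ : ℝ≥0∞) ≤ ⨆ k ∈ spectrum ℝ T, (‖k‖₊ : ℝ≥0∞)
        exact le_iSup₂ (f := fun k (_ : k ∈ spectrum ℝ T) => (‖k‖₊ : ℝ≥0∞)) t hts
      rw [hr] at hb
      have h2 := ENNReal.toReal_mono hfin hb
      rw [ENNReal.coe_toReal, coe_nnnorm, Real.norm_eq_abs, ← hrdef] at h2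
      exact (le_abs_self t).trans h2
    have hteq : t = r := le_antisymm htle htr
    have hTx₀' : T x₀ = S x₀ := by rw [hTx₀, hteq, heig]
    set D : X →L[ℝ] X := T - S with hDdef
    have hDapp : ∀ x : X, D x = T x - S x := fun x => rfl
    have hDpos : IsPositiveOp D := by
      intro x hx
      rw [hDapp]
      exact sub_nonneg.2 (hST x hx)
    have hDS : ∀ x : X, D (S x) = S (D x) := by
      intro x
      rw [hDapp, hDapp, map_sub, hcomm' x]
    set N := aux19_nullSubmodule D hDpos with hN
    have hNinv : ∀ x ∈ N, S x ∈ N := by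
      intro x hx
      have hx' : D |x| = 0 := hx
      show D |S x| = 0
      refine le_antisymm ?_ (hDpos _ (abs_nonneg _))
      calc D |S x| ≤ D (S |x|) := aux19_op_mono hDpos (aux19_op_abs hS x)
      _ = S (D |x|) := hDS _
      _ = 0 := by rw [hx', map_zero]
    rcases hirr N (aux19_nullSubmodule_closedIdeal D hDpos) hNinv with hbot | htop
    · exfalso
      have hx₀N : x₀ ∈ N := by
        show D |x₀| = 0
        rw [abs_of_nonneg hx₀.le, hDapp, hTx₀', sub_self]
      rw [hbot, Submodule.mem_bot] at hx₀N
      exact hx₀.ne' hx₀N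
    · ext x
      have hx : D |x| = 0 := by
        have : x ∈ N := by rw [htop]; exact Submodule.mem_top
        exact this
      have h1 : |D x| ≤ D |x| := aux19_op_abs hDpos x
      rw [hx] at h1
      have h2 : D x = 0 := aux19_abs_le_zero h1
      rw [hDapp] at h2
      exact sub_eq_zero.1 h2
end
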